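/- arXiv:0807.3759 — 2 statements merged into one kernel-verified Lean document; each statement's English description precedes it below -/
import Mathlib

section
/- In ℤ[X], the ideal generated by (X² − 2)(X⁴ − 3X² + 1) and (X² − 2)·X³·(X² − 3) equals the principal ideal generated by X² − 2. Consequently the quotient ring ℤ[X]/((X² − 2)(X⁴ − 3X² + 1), (X² − 2)X³(X² − 3)) is isomorphic to ℤ[X]/(X² − 2), which is a free abelian group of rank 2. -/
open Polynomial

/-- In `ℤ[X]`, the ideal generated by `(X² − 2)(X⁴ − 3X² + 1)` and `(X² − 2)X³(X² − 3)` equals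
the principal ideal generated by `X² − 2`; consequently the quotient by the former is isomorphic
to `ℤ[X]/(X² − 2)`, a free abelian group of rank 2. -/
theorem stmt3 :
    Ideal.span ({(X ^ 2 - 2) * (X ^ 4 - 3 * X ^ 2 + 1),
        (X ^ 2 - 2) * X ^ 3 * (X ^ 2 - 3)} : Set (Polynomial ℤ))
      = Ideal.span ({X ^ 2 - 2} : Set (Polynomial ℤ)) ∧
    Nonempty ((Polynomial ℤ ⧸ Ideal.span ({(X ^ 2 - 2) * (X ^ 4 - 3 * X ^ 2 + 1),
        (X ^ 2 - 2) * X ^ 3 * (X ^ 2 - 3)} : Set (Polynomial ℤ)))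
      ≃+* (Polynomial ℤ ⧸ Ideal.span ({X ^ 2 - 2} : Set (Polynomial ℤ)))) ∧
    Module.Free ℤ (Polynomial ℤ ⧸ Ideal.span ({X ^ 2 - 2} : Set (Polynomial ℤ))) ∧
    Module.rank ℤ (Polynomial ℤ ⧸ Ideal.span ({X ^ 2 - 2} : Set (Polynomial ℤ))) = 2 := by
  have hmonic : ((X ^ 2 - 2 : Polynomial ℤ)).Monic := by
    monicity!
  have heq : Ideal.span ({(X ^ 2 - 2) * (X ^ 4 - 3 * X ^ 2 + 1),
      (X ^ 2 - 2) * X ^ 3 * (X ^ 2 - 3)} : Set (Polynomial ℤ))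
      = Ideal.span ({X ^ 2 - 2} : Set (Polynomial ℤ)) := by
    apply le_antisymm
    · rw [Ideal.span_le]
      rintro p (rfl | rfl)
      · exact Ideal.mem_span_singleton.mpr ⟨X ^ 4 - 3 * X ^ 2 + 1, rfl⟩
      · exact Ideal.mem_span_singleton.mpr ⟨X ^ 3 * (X ^ 2 - 3), mul_assoc _ _ _⟩
    · rw [Ideal.span_le, Set.singleton_subset_iff]
      rw [SetLike.mem_coe, Ideal.mem_span_pair]
      refine ⟨1 - X ^ 2 * (X ^ 2 - 3) * (X ^ 4 - 3 * X ^ 2 + 1)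
        + 2 * X ^ 4 * (X ^ 2 - 3) ^ 2, -(X ^ 3 * (X ^ 2 - 3) ^ 2), ?_⟩
      ring
  refine ⟨heq, ⟨Ideal.quotEquivOfEq heq⟩, ?_, ?_⟩
  · exact Module.Free.of_basis (AdjoinRoot.powerBasis' hmonic).basis
  · show Module.rank ℤ (AdjoinRoot (X ^ 2 - 2 : Polynomial ℤ)) = 2
    rw [rank_eq_card_basis (AdjoinRoot.powerBasis' hmonic).basis]
    have h2 : (X ^ 2 - 2 : Polynomial ℤ).natDegree = 2 := by compute_degree!
    simp [AdjoinRoot.powerBasis', h2]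
end

section
/- Let θ ∈ ℝ with θ not an integer multiple of π, and let A ∈ U(3) be the block-diagonal matrix diag(R_θ, 1), where R_θ is the 2×2 rotation matrix by angle θ. If B ∈ U(3) commutes with A, then B commutes with diag(R_t, 1) for every t ∈ ℝ. Equivalently, the centralizer of A in U(3) equals the centralizer of the whole embedded circle {diag(R_t, 1) : t ∈ ℝ}. -/
/-- The block-diagonal matrix `diag(R_θ, 1) ∈ U(3)`, where `R_θ` is the 2×2 rotation by `θ`. -/
noncomputable def rotMat (θ : ℝ) : Matrix (Fin 3) (Fin 3) ℂ :=
  !![(Real.cos θ : ℂ), (Real.sin θ : ℂ), 0;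
     (-Real.sin θ : ℂ), (Real.cos θ : ℂ), 0;
     0, 0, 1]

/-- If `θ` is not an integer multiple of `π` and a unitary `B ∈ U(3)` commutes with
`diag(R_θ, 1)`, then `B` commutes with `diag(R_t, 1)` for every real `t`. -/
theorem stmt15 (θ : ℝ) (hθ : ∀ m : ℤ, θ ≠ m * Real.pi)
    (B : Matrix (Fin 3) (Fin 3) ℂ) (hB : B ∈ Matrix.unitaryGroup (Fin 3) ℂ)
    (hcomm : B * rotMat θ = rotMat θ * B) :
    ∀ t : ℝ, B * rotMat t = rotMat t * B := by
  have hsR : Real.sin θ ≠ 0 := by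
    intro h
    obtain ⟨n, hn⟩ := Real.sin_eq_zero_iff.mp h
    exact hθ n hn.symm
  have hcR : Real.cos θ ≠ 1 := by
    intro h
    apply hsR
    nlinarith [Real.sin_sq_add_cos_sq θ]
  set s : ℂ := (Real.sin θ : ℂ) with hs_def
  set c : ℂ := (Real.cos θ : ℂ) with hc_def
  have hs : s ≠ 0 := by simpa [hs_def] using Complex.ofReal_ne_zero.mpr hsR
  have hc : c ≠ 1 := by
    intro h
    rw [hc_def] at h
    exact_mod_cast hcR (by exact_mod_cast h)
  have pyth : s ^ 2 + c ^ 2 = 1 := by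
    rw [hs_def, hc_def]
    exact_mod_cast Real.sin_sq_add_cos_sq θ
  have key : ∀ i j, ∑ k, B i k * rotMat θ k j = ∑ k, rotMat θ i k * B k j := by
    intro i j
    rw [← Matrix.mul_apply, ← Matrix.mul_apply, hcomm]
  have e02 := key 0 2
  have e12 := key 1 2
  have e20 := key 2 0
  have e21 := key 2 1
  have e00 := key 0 0
  have e01 := key 0 1
  simp only [rotMat, Fin.sum_univ_three, Matrix.cons_val', Matrix.cons_val_zero,
    Matrix.cons_val_one, Matrix.head_cons, Matrix.empty_val', Matrix.cons_val_fin_one,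
    Matrix.head_fin_const, Matrix.cons_val_two, Matrix.tail_cons,
    Matrix.of_apply, ← hs_def, ← hc_def] at e02 e12 e20 e21 e00 e01
  have hc2 : (2 : ℂ) - 2 * c ≠ 0 := by
    intro h
    apply hc
    linear_combination -h / 2
  have zero_of : ∀ x : ℂ, ((2 : ℂ) - 2 * c) * x = 0 → x = 0 := by
    intro x hx
    rcases mul_eq_zero.mp hx with h | h
    · exact absurd h hc2
    · exact h
  have hB02 : B 0 2 = 0 := zero_of _ (by
    linear_combination (1 - c) * e02 + s * e12 - B 0 2 * pyth)
  have hB12 : B 1 2 = 0 := zero_of _ (by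
    linear_combination -s * e02 + (1 - c) * e12 - B 1 2 * pyth)
  have hB20 : B 2 0 = 0 := zero_of _ (by
    linear_combination (c - 1) * e20 + s * e21 - B 2 0 * pyth)
  have hB21 : B 2 1 = 0 := zero_of _ (by
    linear_combination -s * e20 + (c - 1) * e21 - B 2 1 * pyth)
  have hB10 : B 1 0 = -B 0 1 := by
    have h : s * (B 1 0 + B 0 1) = 0 := by linear_combination -e00
    rcases mul_eq_zero.mp h with h | h
    · exact absurd h hs
    · linear_combination h
  have hB11 : B 1 1 = B 0 0 := by
    have h : s * (B 0 0 - B 1 1) = 0 := by linear_combination e01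
    rcases mul_eq_zero.mp h with h | h
    · exact absurd h hs
    · linear_combination -h
  intro t
  ext i j
  fin_cases i <;> fin_cases j <;>
    simp [rotMat, Matrix.mul_apply, Fin.sum_univ_three, hB02, hB12, hB20, hB21, hB10, hB11] <;>
    ring
end
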